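/- Let L ≥ 2, let S = {(p_t, ρ_t)}_{t=1}^T be a repeated cross-sectional dataset, and let w_1,…,w_T > 0 be wealths such that for every t, ρ_t is supported on the budget hyperplane {y ∈ ℝ^L_+ : p_t·y = w_t} (equivalently, in any rationalization, demands almost surely lie on the budget hyperplanes). Suppose the set of normalized price vectors {p_t/w_t : t = 1,…,T} is a triangular configuration. Then S is rationalized by the RPM if and only if S is rationalized by the RUM. -/
import Mathlib


open scoped BigOperators
open MeasureTheory

noncomputable section

/-- Dot product of two vectors in `ℝ^L`. -/
def dotp {L : ℕ} (p y : Fin L → ℝ) : ℝ := ∑ i, p i * y i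

/-- Membership in the nonnegative orthant `ℝ^L_+`. -/
def Nonneg {L : ℕ} (x : Fin L → ℝ) : Prop := ∀ i, 0 ≤ x i

/-- `y_t` is directly revealed preferred to `y_s`. -/
def DRP {L T : ℕ} (p y : Fin T → Fin L → ℝ) (t s : Fin T) : Prop :=
  dotp (p t) (y t) ≥ dotp (p t) (y s)

/-- The dataset `{(p_t, y_t)}` satisfies the Weak Axiom of Revealed Preference. -/
def WARP {L T : ℕ} (p y : Fin T → Fin L → ℝ) : Prop :=
  ¬ ∃ s t : Fin T, y t ≠ y s ∧ DRP p y t s ∧ DRP p y s t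

/-- The dataset `{(p_t, y_t)}` satisfies the Strong Axiom of Revealed Preference. -/
def SARP {L T : ℕ} (p y : Fin T → Fin L → ℝ) : Prop :=
  ¬ ∃ s t : Fin T, y t ≠ y s ∧ Relation.TransGen (DRP p y) t s ∧ DRP p y s t

/-- The repeated cross-sectional dataset `{(p_t, ρ_t)}` is rationalized by the
Random Preference Model: there is a probability space of consumers whose demand
systems almost surely lie in the nonnegative orthant and satisfy WARP, and whose
period-`t` demand distribution is `ρ_t`. -/
def RPMRationalizes {L T : ℕ} (p : Fin T → Fin L → ℝ)
    (ρ : Fin T → Measure (Fin L → ℝ)) : Prop :=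
  ∃ (Θ : Type) (_ : MeasurableSpace Θ) (μ : Measure Θ),
    IsProbabilityMeasure μ ∧
    ∃ y : Θ → Fin T → Fin L → ℝ,
      Measurable y ∧
      (∀ᵐ θ ∂μ, (∀ t, Nonneg (y θ t)) ∧ WARP p (y θ)) ∧
      (∀ t, Measure.map (fun θ => y θ t) μ = ρ t)

/-- The repeated cross-sectional dataset `{(p_t, ρ_t)}` is rationalized by the
Random Utility Model: same as the RPM but with SARP in place of WARP. -/
def RUMRationalizes {L T : ℕ} (p : Fin T → Fin L → ℝ)
    (ρ : Fin T → Measure (Fin L → ℝ)) : Prop :=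
  ∃ (Θ : Type) (_ : MeasurableSpace Θ) (μ : Measure Θ),
    IsProbabilityMeasure μ ∧
    ∃ y : Θ → Fin T → Fin L → ℝ,
      Measurable y ∧
      (∀ᵐ θ ∂μ, (∀ t, Nonneg (y θ t)) ∧ SARP p (y θ)) ∧
      (∀ t, Measure.map (fun θ => y θ t) μ = ρ t)

/-- The set of price vectors `{q_t}` is a triangular configuration: for any three
indices `t, s, k` there exist `λ ∈ [0,1]` and a permutation `σ` of the triple such
that the `σ(0)`-th vector lies coordinatewise below, or coordinatewise above, the
`λ`-convex combination of the other two. -/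
def TriangularConfig {L T : ℕ} (q : Fin T → Fin L → ℝ) : Prop :=
  ∀ t s k : Fin T, ∃ lam ∈ Set.Icc (0 : ℝ) 1, ∃ σ : Equiv.Perm (Fin 3),
    (∀ i, q ((![t, s, k]) (σ 0)) i ≤
        lam * q ((![t, s, k]) (σ 1)) i + (1 - lam) * q ((![t, s, k]) (σ 2)) i) ∨
    (∀ i, q ((![t, s, k]) (σ 0)) i ≥
        lam * q ((![t, s, k]) (σ 1)) i + (1 - lam) * q ((![t, s, k]) (σ 2)) i)


namespace RpmRumAux

lemma perm3 (σ : Equiv.Perm (Fin 3)) :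
    (σ 0 = 0 ∧ σ 1 = 1 ∧ σ 2 = 2) ∨ (σ 0 = 0 ∧ σ 1 = 2 ∧ σ 2 = 1) ∨
    (σ 0 = 1 ∧ σ 1 = 0 ∧ σ 2 = 2) ∨ (σ 0 = 1 ∧ σ 1 = 2 ∧ σ 2 = 0) ∨
    (σ 0 = 2 ∧ σ 1 = 0 ∧ σ 2 = 1) ∨ (σ 0 = 2 ∧ σ 1 = 1 ∧ σ 2 = 0) := by
  revert σ; decide

lemma dotp_mono {L : ℕ} {a b v : Fin L → ℝ} (hv : Nonneg v) (h : ∀ i, a i ≤ b i) :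
    dotp a v ≤ dotp b v :=
  Finset.sum_le_sum fun i _ => mul_le_mul_of_nonneg_right (h i) (hv i)

lemma dotp_combo_le {L : ℕ} {a b c v : Fin L → ℝ} (hv : Nonneg v) {lam : ℝ}
    (h : ∀ i, a i ≤ lam * b i + (1 - lam) * c i) :
    dotp a v ≤ lam * dotp b v + (1 - lam) * dotp c v := by
  have h2 : dotp a v ≤ dotp (fun i => lam * b i + (1 - lam) * c i) v := dotp_mono hv h
  calc dotp a v ≤ dotp (fun i => lam * b i + (1 - lam) * c i) v := h2
    _ = lam * dotp b v + (1 - lam) * dotp c v := by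
        simp [dotp, add_mul, Finset.sum_add_distrib, Finset.mul_sum, mul_assoc]

lemma combo_le_dotp {L : ℕ} {a b c v : Fin L → ℝ} (hv : Nonneg v) {lam : ℝ}
    (h : ∀ i, lam * b i + (1 - lam) * c i ≤ a i) :
    lam * dotp b v + (1 - lam) * dotp c v ≤ dotp a v := by
  have h2 : dotp (fun i => lam * b i + (1 - lam) * c i) v ≤ dotp a v := dotp_mono hv h
  calc lam * dotp b v + (1 - lam) * dotp c v
      = dotp (fun i => lam * b i + (1 - lam) * c i) v := by
        simp [dotp, add_mul, Finset.sum_add_distrib, Finset.mul_sum, mul_assoc]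
    _ ≤ dotp a v := h2

lemma triple_cases {L T : ℕ} (q : Fin T → Fin L → ℝ) (ht : TriangularConfig q)
    (a b c : Fin T) :
    ∃ lam : ℝ, 0 ≤ lam ∧ lam ≤ 1 ∧
      ((∀ i, q a i ≤ lam * q b i + (1 - lam) * q c i) ∨
       (∀ i, q b i ≤ lam * q a i + (1 - lam) * q c i) ∨
       (∀ i, q c i ≤ lam * q a i + (1 - lam) * q b i) ∨
       (∀ i, lam * q b i + (1 - lam) * q c i ≤ q a i) ∨
       (∀ i, lam * q a i + (1 - lam) * q c i ≤ q b i) ∨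
       (∀ i, lam * q a i + (1 - lam) * q b i ≤ q c i)) := by
  obtain ⟨lam, hlam, σ, hcond⟩ := ht a b c
  have h0 : (0:ℝ) ≤ lam := hlam.1
  have h1 : lam ≤ 1 := hlam.2
  have h0' : (0:ℝ) ≤ 1 - lam := by linarith
  have h1' : (1:ℝ) - lam ≤ 1 := by linarith
  rcases perm3 σ with ⟨e0,e1,e2⟩|⟨e0,e1,e2⟩|⟨e0,e1,e2⟩|⟨e0,e1,e2⟩|⟨e0,e1,e2⟩|⟨e0,e1,e2⟩ <;>
    rw [e0, e1, e2] at hcond <;>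
    simp only [Matrix.cons_val_zero, Matrix.cons_val_one, Matrix.head_cons,
      Matrix.cons_val_two, Matrix.tail_cons] at hcond <;>
    rcases hcond with h | h
  · exact ⟨lam, h0, h1, Or.inl h⟩
  · exact ⟨lam, h0, h1, Or.inr (Or.inr (Or.inr (Or.inl h)))⟩
  · refine ⟨1 - lam, h0', h1', Or.inl fun i => ?_⟩
    have := h i
    have e : (1 - lam) * q b i + (1 - (1 - lam)) * q c i
        = lam * q c i + (1 - lam) * q b i := by ring
    rw [e]; exact this
  · refine ⟨1 - lam, h0', h1', Or.inr (Or.inr (Or.inr (Or.inl fun i => ?_)))⟩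
    have := h i
    have e : (1 - lam) * q b i + (1 - (1 - lam)) * q c i
        = lam * q c i + (1 - lam) * q b i := by ring
    rw [e]; exact this
  · exact ⟨lam, h0, h1, Or.inr (Or.inl h)⟩
  · exact ⟨lam, h0, h1, Or.inr (Or.inr (Or.inr (Or.inr (Or.inl h))))⟩
  · refine ⟨1 - lam, h0', h1', Or.inr (Or.inl fun i => ?_)⟩
    have := h i
    have e : (1 - lam) * q a i + (1 - (1 - lam)) * q c i
        = lam * q c i + (1 - lam) * q a i := by ring
    rw [e]; exact this
  · refine ⟨1 - lam, h0', h1', Or.inr (Or.inr (Or.inr (Or.inr (Or.inl fun i => ?_))))⟩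
    have := h i
    have e : (1 - lam) * q a i + (1 - (1 - lam)) * q c i
        = lam * q c i + (1 - lam) * q a i := by ring
    rw [e]; exact this
  · exact ⟨lam, h0, h1, Or.inr (Or.inr (Or.inl h))⟩
  · exact ⟨lam, h0, h1, Or.inr (Or.inr (Or.inr (Or.inr (Or.inr h))))⟩
  · refine ⟨1 - lam, h0', h1', Or.inr (Or.inr (Or.inl fun i => ?_))⟩
    have := h i
    have e : (1 - lam) * q a i + (1 - (1 - lam)) * q b i
        = lam * q b i + (1 - lam) * q a i := by ring
    rw [e]; exact this
  · refine ⟨1 - lam, h0', h1', Or.inr (Or.inr (Or.inr (Or.inr (Or.inr fun i => ?_))))⟩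
    have := h i
    have e : (1 - lam) * q a i + (1 - (1 - lam)) * q b i
        = lam * q b i + (1 - lam) * q a i := by ring
    rw [e]; exact this

lemma succ_mod_cases (k j : ℕ) (hk : 0 < k) :
    ((j+1) % k = j % k + 1 ∧ j % k + 1 < k) ∨ ((j+1) % k = 0 ∧ j % k = k - 1) := by
  have h1 : j % k < k := Nat.mod_lt _ hk
  rcases Nat.lt_or_ge (j % k + 1) k with h | h
  · left
    refine ⟨?_, h⟩
    conv_lhs => rw [← Nat.mod_add_div j k]
    rw [show j % k + k * (j / k) + 1 = (j % k + 1) + k * (j / k) by ring,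
      Nat.add_mul_mod_self_left, Nat.mod_eq_of_lt h]
  · right
    have h2 : j % k + 1 = k := by omega
    constructor
    · conv_lhs => rw [← Nat.mod_add_div j k]
      have e : j % k + k * (j / k) + 1 = k * (j / k + 1) :=
        calc j % k + k * (j / k) + 1 = k * (j / k) + (j % k + 1) := by ring
          _ = k * (j / k) + k := by rw [h2]
          _ = k * (j / k + 1) := by ring
      rw [e, Nat.mul_mod_right]
    · omega

lemma periodic_mod {α : Type*} {g : ℕ → α} {m : ℕ} (hm : 0 < m)
    (hp : ∀ i, g (i + m) = g i) : ∀ i, g i = g (i % m) := by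
  intro i
  induction i using Nat.strong_induction_on with
  | _ i ih =>
    by_cases h : i < m
    · rw [Nat.mod_eq_of_lt h]
    · push_neg at h
      have e : i - m + m = i := by omega
      have h3 : g i = g (i - m) := by conv_lhs => rw [← e, hp]
      rw [h3, ih (i - m) (by omega), Nat.mod_eq_sub_mod h]

lemma periodic_mul {α : Type*} {g : ℕ → α} {m : ℕ}
    (hp : ∀ i, g (i + m) = g i) : ∀ c i, g (i + m * c) = g i := by
  intro c
  induction c with
  | zero => simp
  | succ n ih =>
    intro i
    have e : i + m * (n+1) = (i + m * n) + m := by ring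
    rw [e, hp, ih]

lemma chain_of_transGen {α : Type*} {r : α → α → Prop} {a b : α}
    (h : Relation.TransGen r a b) :
    ∃ n, ∃ u : ℕ → α, 0 < n ∧ u 0 = a ∧ u n = b ∧ ∀ i < n, r (u i) (u (i+1)) := by
  induction h with
  | @single c hr =>
    refine ⟨1, fun i => if i = 0 then a else c, Nat.one_pos, rfl, rfl, ?_⟩
    intro i hi
    interval_cases i
    simpa using hr
  | @tail bb cc h1 hr ih =>
    obtain ⟨n, u, hn, hu0, hun, hedge⟩ := ih
    refine ⟨n + 1, fun i => if i ≤ n then u i else cc, Nat.succ_pos n, ?_, ?_, ?_⟩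
    · simp [hu0]
    · simp
    · intro i hi
      by_cases h2 : i + 1 ≤ n
      · simp only [if_pos (by omega : i ≤ n), if_pos h2]
        exact hedge i (by omega)
      · have hie : i = n := by omega
        rw [hie]
        simp only [if_pos (le_refl n), if_neg (by omega : ¬ n + 1 ≤ n)]
        rw [hun]; exact hr

lemma claimD {L T : ℕ} (q yv : Fin T → Fin L → ℝ)
    (hy : ∀ t, Nonneg (yv t)) (hb : ∀ t, dotp (q t) (yv t) = 1)
    (htri : TriangularConfig q) (a b c d : Fin T)
    (eab : dotp (q a) (yv b) ≤ 1) (ebc : dotp (q b) (yv c) ≤ 1)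
    (ecd : dotp (q c) (yv d) ≤ 1)
    (nba : ¬ dotp (q b) (yv a) ≤ 1) (ncb : ¬ dotp (q c) (yv b) ≤ 1)
    (nac : ¬ dotp (q a) (yv c) ≤ 1)
    (h4 : (¬ dotp (q a) (yv d) ≤ 1 ∧ ¬ dotp (q b) (yv d) ≤ 1) ∨
          dotp (q c) (yv a) ≤ 1) :
    ∃ lam : ℝ, 0 ≤ lam ∧ lam < 1 ∧
      ∀ i, q b i ≤ lam * q a i + (1 - lam) * q c i := by
  push_neg at nba ncb nac
  obtain ⟨lam, h0, h1, hcase⟩ := triple_cases q htri a b c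
  rcases hcase with h | h | h | h | h | h
  · -- q a ≤ combo(b,c) : eval at y c
    exfalso
    have hc := dotp_combo_le (hy c) h
    rw [hb c] at hc
    nlinarith [mul_le_mul_of_nonneg_left ebc h0]
  · -- q b ≤ combo(a,c) : the surviving case (unless lam = 1)
    by_cases hl : lam = 1
    · exfalso
      have hmono : ∀ i, q b i ≤ q a i := by
        intro i; have := h i; rw [hl] at this; linarith
      have := dotp_mono (hy a) hmono
      rw [hb a] at this; linarith
    · exact ⟨lam, h0, lt_of_le_of_ne h1 hl, h⟩
  · -- q c ≤ combo(a,b) : eval at y b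
    exfalso
    have hc := dotp_combo_le (hy b) h
    rw [hb b] at hc
    nlinarith [mul_le_mul_of_nonneg_left eab h0]
  · -- q a ≥ combo(b,c)
    exfalso
    by_cases hl : lam = 1
    · have hmono : ∀ i, q b i ≤ q a i := by
        intro i; have := h i; rw [hl] at this; linarith
      have := dotp_mono (hy a) hmono
      rw [hb a] at this; linarith
    · have hl1 : lam < 1 := lt_of_le_of_ne h1 hl
      have hc := combo_le_dotp (hy b) h
      rw [hb b] at hc
      nlinarith [mul_pos (by linarith : (0:ℝ) < 1 - lam) (by linarith : (0:ℝ) < dotp (q c) (yv b) - 1)]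
  · -- q b ≥ combo(a,c)
    exfalso
    by_cases hl : lam = 0
    · have hmono : ∀ i, q c i ≤ q b i := by
        intro i; have := h i; rw [hl] at this; linarith
      have := dotp_mono (hy b) hmono
      rw [hb b] at this; linarith
    · have hl0 : 0 < lam := lt_of_le_of_ne h0 (Ne.symm hl)
      have hc := combo_le_dotp (hy c) h
      rw [hb c] at hc
      nlinarith [mul_pos hl0 (by linarith : (0:ℝ) < dotp (q a) (yv c) - 1)]
  · -- q c ≥ combo(a,b)
    exfalso
    by_cases hl : lam = 1
    · have hmono : ∀ i, q a i ≤ q c i := by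
        intro i; have := h i; rw [hl] at this; linarith
      have := dotp_mono (hy c) hmono
      rw [hb c] at this; linarith
    · have hl1 : lam < 1 := lt_of_le_of_ne h1 hl
      rcases h4 with ⟨nad, nbd⟩ | eca
      · push_neg at nad nbd
        have hc := combo_le_dotp (hy d) h
        nlinarith [mul_nonneg h0 (by linarith : (0:ℝ) ≤ dotp (q a) (yv d) - 1),
          mul_pos (by linarith : (0:ℝ) < 1 - lam) (by linarith : (0:ℝ) < dotp (q b) (yv d) - 1)]
      · have hc := combo_le_dotp (hy a) h
        rw [hb a] at hc
        nlinarith [mul_pos (by linarith : (0:ℝ) < 1 - lam) (by linarith : (0:ℝ) < dotp (q b) (yv a) - 1)]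

lemma warp_to_sarp {L T : ℕ} (q yv : Fin T → Fin L → ℝ)
    (hy : ∀ t, Nonneg (yv t)) (hb : ∀ t, dotp (q t) (yv t) = 1)
    (htri : TriangularConfig q) (hW : WARP q yv) : SARP q yv := by
  classical
  have hDRP : ∀ t s, DRP q yv t s ↔ dotp (q t) (yv s) ≤ 1 := by
    intro t s; unfold DRP; rw [hb t]
  intro hvio
  obtain ⟨s, t, hne, htg, hst⟩ := hvio
  obtain ⟨n, u, hn, hu0, hun, hedge⟩ := chain_of_transGen htg
  have hexx : ∃ m, 0 < m ∧ ∃ g : ℕ → Fin T, (∀ i, g (i + m) = g i) ∧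
      (∀ i, dotp (q (g i)) (yv (g (i + 1))) ≤ 1) ∧ ∃ i j, yv (g i) ≠ yv (g j) := by
    refine ⟨n + 1, Nat.succ_pos n, fun i => u (i % (n+1)), ?_, ?_, ?_⟩
    · intro i; beta_reduce; rw [Nat.add_mod_right]
    · intro i
      beta_reduce
      rcases succ_mod_cases (n+1) i (Nat.succ_pos n) with ⟨e1, e2⟩ | ⟨e1, e2⟩
      · rw [e1]
        exact (hDRP _ _).1 (hedge (i % (n+1)) (by omega))
      · rw [e1]
        have e2' : i % (n+1) = n := by omega
        rw [e2', hun, hu0]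
        exact (hDRP _ _).1 hst
    · refine ⟨0, n, ?_⟩
      beta_reduce
      rw [Nat.zero_mod, Nat.mod_eq_of_lt (Nat.lt_succ_self n), hu0, hun]
      exact hne
  obtain ⟨m, hspec, hmin⟩ :
      ∃ m, (0 < m ∧ ∃ g : ℕ → Fin T, (∀ i, g (i + m) = g i) ∧
        (∀ i, dotp (q (g i)) (yv (g (i + 1))) ≤ 1) ∧ ∃ i j, yv (g i) ≠ yv (g j)) ∧
      ∀ k, k < m → ¬ (0 < k ∧ ∃ g : ℕ → Fin T, (∀ i, g (i + k) = g i) ∧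
        (∀ i, dotp (q (g i)) (yv (g (i + 1))) ≤ 1) ∧ ∃ i j, yv (g i) ≠ yv (g j)) :=
    ⟨Nat.find hexx, Nat.find_spec hexx, fun k hk => Nat.find_min hexx hk⟩
  obtain ⟨hm, g, hper, hedg, hdis⟩ := hspec
  have hmod := periodic_mod hm hper
  have hmul := periodic_mul hper
  -- all bundles in a period are distinct
  have hdistinct : ∀ i k, 0 < k → k < m → yv (g i) ≠ yv (g (i + k)) := by
    intro i k hk0 hkm heq
    by_cases h1 : ∃ a b : ℕ, yv (g (i + a % k)) ≠ yv (g (i + b % k))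
    · apply hmin k hkm
      refine ⟨hk0, fun j => g (i + j % k), ?_, ?_, h1⟩
      · intro j; beta_reduce; rw [Nat.add_mod_right]
      · intro j
        beta_reduce
        rcases succ_mod_cases k j hk0 with ⟨e1, e2⟩ | ⟨e1, e2⟩
        · rw [e1, show i + (j % k + 1) = (i + j % k) + 1 by ring]
          exact hedg (i + j % k)
        · rw [e1, e2, Nat.add_zero]
          have e3 := hedg (i + (k-1))
          rw [show i + (k-1) + 1 = i + k by omega] at e3
          rw [← heq] at e3
          exact e3
    · push_neg at h1
      apply hmin (m - k) (by omega)
      refine ⟨by omega, fun j => g (i + k + j % (m - k)), ?_, ?_, ?_⟩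
      · intro j; beta_reduce; rw [Nat.add_mod_right]
      · intro j
        beta_reduce
        rcases succ_mod_cases (m-k) j (by omega) with ⟨e1, e2⟩ | ⟨e1, e2⟩
        · rw [e1, show i + k + (j % (m-k) + 1) = (i + k + j % (m-k)) + 1 by ring]
          exact hedg _
        · rw [e1, e2, Nat.add_zero]
          have e3 := hedg (i + k + (m - k - 1))
          rw [show i + k + (m-k-1) + 1 = i + m by omega, hper i, heq] at e3
          exact e3
      · by_contra h2
        push_neg at h2
        have w1 : ∀ r, r < k → yv (g (i + r)) = yv (g i) := by
          intro r hr
          have h3 := h1 r 0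
          rwa [Nat.mod_eq_of_lt hr, Nat.zero_mod, Nat.add_zero] at h3
        have w2 : ∀ r, r < m - k → yv (g (i + k + r)) = yv (g i) := by
          intro r hr
          have h3 := h2 r 0
          rw [Nat.mod_eq_of_lt hr, Nat.zero_mod, Nat.add_zero] at h3
          rw [h3]; exact heq.symm
        have w3 : ∀ r, yv (g (i + r)) = yv (g i) := by
          intro r
          induction r using Nat.strong_induction_on with
          | _ r ih =>
            by_cases hrm : r < m
            · by_cases hrk : r < k
              · exact w1 r hrk
              · rw [show i + r = i + k + (r - k) by omega]
                exact w2 (r - k) (by omega)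
            · rw [show i + r = (i + (r - m)) + m by omega, hper]
              exact ih (r - m) (by omega)
        obtain ⟨i0, j0, hnej⟩ := hdis
        apply hnej
        have w4 : ∀ a : ℕ, yv (g a) = yv (g i) := by
          intro a
          have hc : i + 1 ≤ m * (i + 1) := Nat.le_mul_of_pos_left (i+1) hm
          have e0 : yv (g a) = yv (g (a + m * (i+1))) := by rw [hmul]
          set D := m * (i + 1) with hD
          rw [e0, show a + D = i + (a + D - i) by omega, w3]
        rw [w4 i0, w4 j0]
  -- no chords
  have hchord : ∀ i k, 2 ≤ k → k < m → ¬ dotp (q (g i)) (yv (g (i + k))) ≤ 1 := by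
    intro i k hk2 hkm hF
    have hm' : 0 < m - k + 1 := by omega
    apply hmin (m - k + 1) (by omega)
    refine ⟨hm', fun j => if j % (m - k + 1) = m - k then g i
      else g (i + k + j % (m - k + 1)), ?_, ?_, ?_⟩
    · intro j; beta_reduce; rw [Nat.add_mod_right]
    · intro j
      beta_reduce
      rcases succ_mod_cases (m - k + 1) j hm' with ⟨e1, e2⟩ | ⟨e1, e2⟩
      · rw [e1]
        by_cases hr : j % (m - k + 1) + 1 = m - k
        · rw [if_pos hr, if_neg (by omega : ¬ j % (m-k+1) = m - k)]
          have e3 := hedg (i + (m - 1))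
          rw [show i + (m-1) + 1 = i + m by omega, hper] at e3
          rw [show i + k + j % (m-k+1) = i + (m-1) by omega]
          exact e3
        · rw [if_neg (by omega : ¬ j % (m-k+1) + 1 = m - k),
            if_neg (by omega : ¬ j % (m-k+1) = m-k),
            show i + k + (j % (m-k+1) + 1) = (i + k + j % (m-k+1)) + 1 by ring]
          exact hedg _
      · have e2' : j % (m - k + 1) = m - k := by omega
        rw [e1, e2', if_pos rfl, if_neg (by omega : ¬ (0:ℕ) = m-k), Nat.add_zero]
        exact hF
    · refine ⟨0, m - k, ?_⟩
      beta_reduce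
      rw [Nat.zero_mod, Nat.mod_eq_of_lt (by omega : m - k < m - k + 1),
        if_neg (by omega : ¬ (0:ℕ) = m - k), if_pos rfl, Nat.add_zero]
      exact (hdistinct i k (by omega) hkm).symm
  -- m ≥ 3
  have hm3 : 3 ≤ m := by
    by_contra hlt
    push_neg at hlt
    interval_cases m
    · have hconst : ∀ i, g i = g 0 := by
        intro i
        induction i with
        | zero => rfl
        | succ c ih => rw [← ih]; exact hper c
      obtain ⟨i0, j0, hnej⟩ := hdis
      exact hnej (by rw [hconst i0, hconst j0])
    · apply hW
      refine ⟨g 1, g 0, hdistinct 0 1 one_pos one_lt_two, (hDRP _ _).2 (hedg 0), ?_⟩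
      have h3 := hedg 1
      rw [show (1:ℕ) + 1 = 0 + 2 from rfl, hper 0] at h3
      exact (hDRP _ _).2 h3
  -- surviving case of the triangular configuration, for every i
  have hD : ∀ i : ℕ, ∃ lam : ℝ, 0 ≤ lam ∧ lam < 1 ∧
      ∀ ℓ, q (g (i+1)) ℓ ≤ lam * q (g i) ℓ + (1 - lam) * q (g (i+2)) ℓ := by
    intro i
    have nba : ¬ dotp (q (g (i+1))) (yv (g i)) ≤ 1 := by
      have h3 := hchord (i+1) (m-1) (by omega) (by omega)
      rwa [show i + 1 + (m-1) = i + m by omega, hper] at h3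
    have ncb : ¬ dotp (q (g (i+2))) (yv (g (i+1))) ≤ 1 := by
      have h3 := hchord (i+2) (m-1) (by omega) (by omega)
      rwa [show i + 2 + (m-1) = (i+1) + m by omega, hper] at h3
    have nac : ¬ dotp (q (g i)) (yv (g (i+2))) ≤ 1 := hchord i 2 le_rfl (by omega)
    have h4 : (¬ dotp (q (g i)) (yv (g (i+3))) ≤ 1 ∧
        ¬ dotp (q (g (i+1))) (yv (g (i+3))) ≤ 1) ∨
        dotp (q (g (i+2))) (yv (g i)) ≤ 1 := by
      rcases eq_or_lt_of_le hm3 with h3 | h4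
      · right
        have h5 := hedg (i+2)
        rwa [show i + 2 + 1 = i + m by omega, hper] at h5
      · left
        exact ⟨hchord i 3 (by omega) (by omega), hchord (i+1) 2 le_rfl (by omega)⟩
    exact claimD q yv hy hb htri (g i) (g (i+1)) (g (i+2)) (g (i+3))
      (hedg i) (by have h5 := hedg (i+1); rwa [show i+1+1 = i+2 by ring] at h5)
      (by have h5 := hedg (i+2); rwa [show i+2+1 = i+3 by ring] at h5)
      nba ncb nac h4
  choose lam hl0 hl1 hcomb using hD
  -- contradiction via max propagation
  have nba0 : ¬ dotp (q (g 1)) (yv (g 0)) ≤ 1 := by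
    have h3 := hchord 1 (m-1) (by omega) (by omega)
    rwa [show 1 + (m-1) = 0 + m by omega, hper] at h3
  apply nba0
  have hq01 : ∀ ℓ, q (g 0) ℓ = q (g 1) ℓ := by
    intro ℓ
    obtain ⟨i0, hi0mem, hi0max⟩ := Finset.exists_max_image (Finset.range m)
      (fun j => q (g j) ℓ) ⟨0, Finset.mem_range.mpr hm⟩
    set M := q (g i0) ℓ with hM
    have haM : ∀ j, q (g j) ℓ ≤ M := by
      intro j
      rw [hmod j]
      exact hi0max _ (Finset.mem_range.mpr (Nat.mod_lt _ hm))
    have hprop : ∀ c, q (g (i0 + c)) ℓ = M := by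
      intro c
      induction c with
      | zero => rfl
      | succ c ih =>
        set j := i0 + c + (m - 1) with hj
        have hineq := hcomb j ℓ
        have e1 : q (g (j + 1)) ℓ = M := by
          rw [show j + 1 = (i0 + c) + m by omega, hper]; exact ih
        have e2 : q (g (j + 1 + 1)) ℓ = q (g (i0 + c + 1)) ℓ := by
          rw [show j + 1 + 1 = (i0 + c + 1) + m by omega, hper]
        rw [e1, e2] at hineq
        have h5 : lam j * q (g j) ℓ ≤ lam j * M :=
          mul_le_mul_of_nonneg_left (haM j) (hl0 j)
        have h6 : (1 - lam j) * M ≤ (1 - lam j) * q (g (i0 + c + 1)) ℓ := by linarith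
        have h7 : M ≤ q (g (i0 + c + 1)) ℓ :=
          le_of_mul_le_mul_left h6 (by linarith [hl1 j])
        exact le_antisymm (haM _) h7
    have hc : i0 + 1 ≤ m * (i0 + 1) := Nat.le_mul_of_pos_left (i0+1) hm
    set D := m * (i0 + 1) with hD
    have e0 : q (g 0) ℓ = M := by
      have h5 := hprop (D - i0)
      rwa [show i0 + (D - i0) = 0 + D by omega, hD, hmul] at h5
    have e1 : q (g 1) ℓ = M := by
      have h5 := hprop (1 + D - i0)
      rwa [show i0 + (1 + D - i0) = 1 + D by omega, hD, hmul] at h5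
    rw [e0, e1]
  have heq2 : dotp (q (g 1)) (yv (g 0)) = dotp (q (g 0)) (yv (g 0)) := by
    unfold dotp
    exact Finset.sum_congr rfl fun ℓ _ => by rw [hq01 ℓ]
  rw [heq2, hb (g 0)]

end RpmRumAux

open RpmRumAux in
/-- Proposition 2 of the paper: if demands are supported on the
budget hyperplanes and the normalized prices `p_t / w_t` form a triangular
configuration, then rationalizability by the RPM is equivalent to
rationalizability by the RUM. -/
theorem rpm_iff_rum_of_triangular
    {L T : ℕ} (hL : 2 ≤ L) (hT : 1 ≤ T)
    (p : Fin T → Fin L → ℝ) (hp : ∀ t i, 0 < p t i)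
    (w : Fin T → ℝ) (hw : ∀ t, 0 < w t)
    (ρ : Fin T → Measure (Fin L → ℝ))
    (hprob : ∀ t, IsProbabilityMeasure (ρ t))
    (hsupp : ∀ t, ρ t {x : Fin L → ℝ | Nonneg x ∧ dotp (p t) x = w t} = 1)
    (htri : TriangularConfig (fun t i => p t i / w t)) :
    RPMRationalizes p ρ ↔ RUMRationalizes p ρ := by
  constructor
  · rintro ⟨Θ, mΘ, μ, hμ, y, hmeas, hae, hmap⟩
    refine ⟨Θ, mΘ, μ, hμ, y, hmeas, ?_, hmap⟩
    have hymeas : ∀ t : Fin T, Measurable fun θ => y θ t :=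
      fun t => (measurable_pi_apply t).comp hmeas
    have hBmeas : ∀ t : Fin T,
        MeasurableSet {x : Fin L → ℝ | Nonneg x ∧ dotp (p t) x = w t} := by
      intro t
      have he : {x : Fin L → ℝ | Nonneg x ∧ dotp (p t) x = w t}
          = {x | Nonneg x} ∩ {x | dotp (p t) x = w t} := rfl
      rw [he]
      apply MeasurableSet.inter
      · have he2 : {x : Fin L → ℝ | Nonneg x} = ⋂ i, {x | 0 ≤ x i} := by
          ext x; simp [Nonneg]
        rw [he2]
        exact MeasurableSet.iInter fun i =>
          measurableSet_le measurable_const (measurable_pi_apply i)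
      · have hd : Measurable fun x : Fin L → ℝ => dotp (p t) x := by
          unfold dotp
          exact Finset.measurable_sum _ fun i _ => (measurable_pi_apply i).const_mul _
        exact hd (measurableSet_singleton (w t))
    have hbud : ∀ᵐ θ ∂μ, ∀ t, dotp (p t) (y θ t) = w t := by
      rw [ae_all_iff]
      intro t
      have h1 : μ ((fun θ => y θ t) ⁻¹' {x | Nonneg x ∧ dotp (p t) x = w t}) = 1 := by
        rw [← Measure.map_apply (hymeas t) (hBmeas t), hmap t]
        exact hsupp t
      have hpre : MeasurableSet
          ((fun θ => y θ t) ⁻¹' {x | Nonneg x ∧ dotp (p t) x = w t}) :=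
        (hymeas t) (hBmeas t)
      have h2 : ∀ᵐ θ ∂μ, y θ t ∈ {x | Nonneg x ∧ dotp (p t) x = w t} := by
        rw [ae_iff]
        exact (prob_compl_eq_zero_iff hpre).mpr h1
      filter_upwards [h2] with θ hθ
      exact hθ.2
    filter_upwards [hae, hbud] with θ h1 h2
    refine ⟨h1.1, ?_⟩
    have hdiv : ∀ (t : Fin T) (v : Fin L → ℝ),
        dotp (fun i => p t i / w t) v = dotp (p t) v / w t := by
      intro t v; simp [dotp, div_mul_eq_mul_div, Finset.sum_div]
    have hrel : DRP p (y θ) = DRP (fun t i => p t i / w t) (y θ) := by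
      funext t s
      rw [eq_iff_iff]
      unfold DRP
      rw [hdiv, hdiv, ge_iff_le, ge_iff_le]
      exact (div_le_div_iff_of_pos_right (hw t)).symm
    have hb2 : ∀ t, dotp ((fun t i => p t i / w t) t) (y θ t) = 1 := by
      intro t; rw [hdiv, h2 t, div_self (hw t).ne']
    have hW : WARP (fun t i => p t i / w t) (y θ) := by
      unfold WARP; rw [← hrel]; exact h1.2
    have hS : SARP (fun t i => p t i / w t) (y θ) :=
      warp_to_sarp _ (y θ) h1.1 hb2 htri hW
    unfold SARP at hS ⊢
    rw [hrel]
    exact hS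
  · rintro ⟨Θ, mΘ, μ, hμ, y, hmeas, hae, hmap⟩
    refine ⟨Θ, mΘ, μ, hμ, y, hmeas, ?_, hmap⟩
    filter_upwards [hae] with θ h1
    refine ⟨h1.1, ?_⟩
    rintro ⟨s, t, hne, h2, h3⟩
    exact h1.2 ⟨s, t, hne, Relation.TransGen.single h2, h3⟩
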